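/- For any vector ψ = (1/√N) Σ_j e^{iθ_j} |j⟩ (a maximally coherent state) and the dephasing map Λ with off-diagonal factors 1+α_{μν}, the l₁-coherence of the output is C_{l₁}(Λ(|ψ⟩⟨ψ|)) = (1/N) Σ_{μ≠ν} |1+α_{μν}|, independently of the phases θ_j. Consequently, the l₁-decohering power of Λ equals D(Λ) = N − 1 − (1/N) Σ_{μ≠ν} |1+α_{μν}|, and 0 ≤ D(Λ) ≤ N−1. -/

import Mathlib

open Matrix BigOperators

/-- The `l₁`-coherence measure `C_{l₁}(ρ) = ∑_{μ≠ν} |ρ_{μν}|`. -/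
noncomputable def Cl1 {N : ℕ} (ρ : Matrix (Fin N) (Fin N) ℂ) : ℝ :=
  ∑ μ, ∑ ν, if μ ≠ ν then ‖ρ μ ν‖ else 0

/-- Dephasing-type map with off-diagonal factors `1 + α μ ν`. -/
noncomputable def dephasingMap {N : ℕ} (α : Fin N → Fin N → ℂ)
    (ρ : Matrix (Fin N) (Fin N) ℂ) : Matrix (Fin N) (Fin N) ℂ :=
  Matrix.of fun μ ν => if μ = ν then ρ μ ν else (1 + α μ ν) * ρ μ ν

/-- For any maximally coherent state `ψ_j = e^{iθ_j}/√N`,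
`C_{l₁}(Λ(|ψ⟩⟨ψ|)) = (1/N) ∑_{μ≠ν} |1+α_{μν}|` independently of the phases; hence the
`l₁`-decohering power is `D = N - 1 - (1/N) ∑_{μ≠ν} |1+α_{μν}|` and `0 ≤ D ≤ N-1`. -/
theorem stmt7 {N : ℕ} (hN : 1 ≤ N) (α : Fin N → Fin N → ℂ)
    (hα : ∀ μ ν, μ ≠ ν → ‖1 + α μ ν‖ ≤ 1) (θ : Fin N → ℝ) :
    Cl1 (dephasingMap α (Matrix.of fun μ ν : Fin N =>
        ((1 / Real.sqrt N : ℝ) : ℂ) * Complex.exp (Complex.I * θ μ) *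
          (starRingEnd ℂ) (((1 / Real.sqrt N : ℝ) : ℂ) * Complex.exp (Complex.I * θ ν))))
      = (1 / N : ℝ) * ∑ μ, ∑ ν, (if μ ≠ ν then ‖1 + α μ ν‖ else 0) ∧
    0 ≤ (N : ℝ) - 1 - (1 / N : ℝ) * ∑ μ, ∑ ν, (if μ ≠ ν then ‖1 + α μ ν‖ else 0) ∧
    (N : ℝ) - 1 - (1 / N : ℝ) * ∑ μ, ∑ ν, (if μ ≠ ν then ‖1 + α μ ν‖ else 0)
      ≤ (N : ℝ) - 1 := by
  have hNpos : (0:ℝ) < N := by exact_mod_cast hN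
  have hsqrt : Real.sqrt N ≠ 0 := by positivity
  -- the sum is nonnegative
  have hsum_nonneg : 0 ≤ ∑ μ, ∑ ν, (if μ ≠ ν then ‖1 + α μ ν‖ else 0) := by
    apply Finset.sum_nonneg; intro μ _; apply Finset.sum_nonneg; intro ν _
    split
    · exact norm_nonneg _
    · exact le_rfl
  -- the sum is at most N*(N-1)
  have hsum_le : (∑ μ, ∑ ν, (if μ ≠ ν then ‖1 + α μ ν‖ else 0))
      ≤ (N : ℝ) * ((N : ℝ) - 1) := by
    calc (∑ μ, ∑ ν, (if μ ≠ ν then ‖1 + α μ ν‖ else 0))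
        ≤ ∑ μ : Fin N, ∑ ν : Fin N, (if μ ≠ ν then (1:ℝ) else 0) := by
          apply Finset.sum_le_sum; intro μ _; apply Finset.sum_le_sum; intro ν _
          split
          · exact hα μ ν ‹_›
          · exact le_rfl
      _ = (N : ℝ) * ((N : ℝ) - 1) := by
          have h1 : ∀ μ : Fin N, (∑ ν : Fin N, (if μ ≠ ν then (1:ℝ) else 0)) = (N : ℝ) - 1 := by
            intro μ
            have he : ∀ ν : Fin N, (if μ ≠ ν then (1:ℝ) else 0)
                = 1 - (if μ = ν then (1:ℝ) else 0) := by
              intro ν; by_cases hh : μ = ν <;> simp [hh]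
            rw [Finset.sum_congr rfl fun ν _ => he ν, Finset.sum_sub_distrib]
            simp
          rw [Finset.sum_congr rfl fun μ _ => h1 μ]
          simp [mul_comm]; ring
  constructor
  · -- main computation
    unfold Cl1 dephasingMap
    rw [Finset.mul_sum]
    apply Finset.sum_congr rfl; intro μ _
    rw [Finset.mul_sum]
    apply Finset.sum_congr rfl; intro ν _
    by_cases h : μ = ν
    · simp [h]
    · simp only [Matrix.of_apply, Ne, h, not_false_iff, if_true, if_neg h, ite_true,
        if_false]
      rw [norm_mul, norm_mul, norm_mul, Complex.norm_conj, norm_mul]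
      simp only [Complex.norm_exp, Complex.norm_real, Complex.mul_re, Complex.I_re,
        Complex.ofReal_re, Complex.I_im, Complex.ofReal_im]
      simp [abs_of_nonneg (Real.sqrt_nonneg (N:ℝ))]
      rw [show (√(N:ℝ))⁻¹ * (√(N:ℝ))⁻¹ = (√(N:ℝ) * √(N:ℝ))⁻¹ by rw [mul_inv],
        Real.mul_self_sqrt hNpos.le]
      ring
  constructor
  · have : (1 / N : ℝ) * (∑ μ, ∑ ν, (if μ ≠ ν then ‖1 + α μ ν‖ else 0))
        ≤ (1 / N : ℝ) * ((N : ℝ) * ((N : ℝ) - 1)) := by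
      apply mul_le_mul_of_nonneg_left hsum_le; positivity
    have h2 : (1 / N : ℝ) * ((N : ℝ) * ((N : ℝ) - 1)) = (N : ℝ) - 1 := by
      field_simp
    linarith
  · have : 0 ≤ (1 / N : ℝ) * (∑ μ, ∑ ν, (if μ ≠ ν then ‖1 + α μ ν‖ else 0)) := by
      positivity
    linarith
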